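/- For ν = 3, the least positive integer r such that r · A_{k,j}(3) is an integer for all nonnegative integers j ≤ k equals 10 = C(5,3). Equivalently: 10 · A_{k,j}(3) ∈ ℤ for all j ≤ k, and for every positive integer r with r · A_{k,j}(3) ∈ ℤ for all j ≤ k, 10 divides r. -/

import Mathlib

set_option maxHeartbeats 1600000

/-- `A ν k j` is the rational number `A_{k,j}(ν) = C(k,j)·(k+ν)!·ν! / ((k−j+ν)!·(j+ν)!)`. -/
def A (ν k j : ℕ) : ℚ :=
  (Nat.choose k j : ℚ) * ((k + ν).factorial : ℚ) * (ν.factorial : ℚ) /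
    (((k - j + ν).factorial : ℚ) * ((j + ν).factorial : ℚ))

/-- The explicit integer equal to `10 · A_{k,j}(3)`. -/
private def Z6 (k j : ℕ) : ℤ :=
  10*(k.choose j)*((k+3).choose (j+3)) - 15*(k.choose (j+1))*((k+3).choose (j+2))
  + 15*(k.choose (j+1))*((k+3).choose (j+3)) + 6*(k.choose (j+2))*((k+3).choose (j+1))
  - 18*(k.choose (j+2))*((k+3).choose (j+2)) + 6*(k.choose (j+2))*((k+3).choose (j+3))
  - (k.choose (j+3))*((k+3).choose j) + 3*(k.choose (j+3))*((k+3).choose (j+1))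
  - 6*(k.choose (j+3))*((k+3).choose (j+2))

private lemma Z6_castQ (k j : ℕ) :
    ((Z6 k j : ℤ) : ℚ) =
      10*(k.choose j)*((k+3).choose (j+3)) - 15*(k.choose (j+1))*((k+3).choose (j+2))
      + 15*(k.choose (j+1))*((k+3).choose (j+3)) + 6*(k.choose (j+2))*((k+3).choose (j+1))
      - 18*(k.choose (j+2))*((k+3).choose (j+2)) + 6*(k.choose (j+2))*((k+3).choose (j+3))
      - (k.choose (j+3))*((k+3).choose j) + 3*(k.choose (j+3))*((k+3).choose (j+1))
      - 6*(k.choose (j+3))*((k+3).choose (j+2)) := by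
  rw [Z6]; push_cast; ring

private lemma keyGen (j m : ℕ) :
    (10 : ℚ) * A 3 (j+m+3) j =
      10*((j+m+3).choose j)*((j+m+6).choose (j+3))
      - 15*((j+m+3).choose (j+1))*((j+m+6).choose (j+2))
      + 15*((j+m+3).choose (j+1))*((j+m+6).choose (j+3))
      + 6*((j+m+3).choose (j+2))*((j+m+6).choose (j+1))
      - 18*((j+m+3).choose (j+2))*((j+m+6).choose (j+2))
      + 6*((j+m+3).choose (j+2))*((j+m+6).choose (j+3))
      - ((j+m+3).choose (j+3))*((j+m+6).choose j)
      + 3*((j+m+3).choose (j+3))*((j+m+6).choose (j+1))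
      - 6*((j+m+3).choose (j+3))*((j+m+6).choose (j+2)) := by
  have x1 : ((j:ℚ)+1) ≠ 0 := by positivity
  have x2 : ((j:ℚ)+2) ≠ 0 := by positivity
  have x3 : ((j:ℚ)+3) ≠ 0 := by positivity
  have y4 : ((m:ℚ)+4) ≠ 0 := by positivity
  have y5 : ((m:ℚ)+5) ≠ 0 := by positivity
  have y6 : ((m:ℚ)+6) ≠ 0 := by positivity
  -- lower-shift relations for n = j+m+3
  have q1 : (((j+m+3).choose (j+1) : ℕ) : ℚ) = ((j+m+3).choose j) * ((m:ℚ)+3) / ((j:ℚ)+1) := by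
    rw [eq_div_iff x1]
    have := Nat.choose_succ_right_eq (j+m+3) j
    rw [show j+m+3-j = m+3 by omega] at this
    exact_mod_cast this
  have q2 : (((j+m+3).choose (j+2) : ℕ) : ℚ) = ((j+m+3).choose (j+1)) * ((m:ℚ)+2) / ((j:ℚ)+2) := by
    rw [eq_div_iff x2]
    have := Nat.choose_succ_right_eq (j+m+3) (j+1)
    rw [show j+m+3-(j+1) = m+2 by omega] at this
    exact_mod_cast this
  have q3 : (((j+m+3).choose (j+3) : ℕ) : ℚ) = ((j+m+3).choose (j+2)) * ((m:ℚ)+1) / ((j:ℚ)+3) := by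
    rw [eq_div_iff x3]
    have := Nat.choose_succ_right_eq (j+m+3) (j+2)
    rw [show j+m+3-(j+2) = m+1 by omega] at this
    exact_mod_cast this
  -- lower-shift relations for n = j+m+6
  have q4 : (((j+m+6).choose (j+1) : ℕ) : ℚ) = ((j+m+6).choose j) * ((m:ℚ)+6) / ((j:ℚ)+1) := by
    rw [eq_div_iff x1]
    have := Nat.choose_succ_right_eq (j+m+6) j
    rw [show j+m+6-j = m+6 by omega] at this
    exact_mod_cast this
  have q5 : (((j+m+6).choose (j+2) : ℕ) : ℚ) = ((j+m+6).choose (j+1)) * ((m:ℚ)+5) / ((j:ℚ)+2) := by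
    rw [eq_div_iff x2]
    have := Nat.choose_succ_right_eq (j+m+6) (j+1)
    rw [show j+m+6-(j+1) = m+5 by omega] at this
    exact_mod_cast this
  have q6 : (((j+m+6).choose (j+3) : ℕ) : ℚ) = ((j+m+6).choose (j+2)) * ((m:ℚ)+4) / ((j:ℚ)+3) := by
    rw [eq_div_iff x3]
    have := Nat.choose_succ_right_eq (j+m+6) (j+2)
    rw [show j+m+6-(j+2) = m+4 by omega] at this
    exact_mod_cast this
  -- upper-shift: relate (j+m+6).choose j to (j+m+3).choose j
  have q7 : (((j+m+6).choose j : ℕ) : ℚ)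
      = ((j+m+3).choose j) * (((j:ℚ)+(m:ℚ)+4) * ((j:ℚ)+(m:ℚ)+5) * ((j:ℚ)+(m:ℚ)+6))
        / (((m:ℚ)+4) * ((m:ℚ)+5) * ((m:ℚ)+6)) := by
    rw [eq_div_iff (by positivity)]
    have h4 := Nat.choose_mul_succ_eq (j+m+3) j
    have h5 := Nat.choose_mul_succ_eq (j+m+4) j
    have h6 := Nat.choose_mul_succ_eq (j+m+5) j
    rw [show j+m+3+1 = j+m+4 by omega, show j+m+4-j = m+4 by omega] at h4
    rw [show j+m+4+1 = j+m+5 by omega, show j+m+5-j = m+5 by omega] at h5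
    rw [show j+m+5+1 = j+m+6 by omega, show j+m+6-j = m+6 by omega] at h6
    have h4' : (((j+m+4).choose j : ℕ) : ℚ) * ((m:ℚ)+4) = ((j+m+3).choose j) * ((j:ℚ)+(m:ℚ)+4) := by
      exact_mod_cast h4.symm
    have h5' : (((j+m+5).choose j : ℕ) : ℚ) * ((m:ℚ)+5) = ((j+m+4).choose j) * ((j:ℚ)+(m:ℚ)+5) := by
      exact_mod_cast h5.symm
    have h6' : (((j+m+6).choose j : ℕ) : ℚ) * ((m:ℚ)+6) = ((j+m+5).choose j) * ((j:ℚ)+(m:ℚ)+6) := by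
      exact_mod_cast h6.symm
    linear_combination (((m:ℚ)+4)*((m:ℚ)+5))*h6' + (((m:ℚ)+4)*((j:ℚ)+(m:ℚ)+6))*h5'
      + (((j:ℚ)+(m:ℚ)+5)*((j:ℚ)+(m:ℚ)+6))*h4'
  -- A in terms of (j+m+3).choose j and (j+m+6).choose (j+3)
  have hA : A 3 (j+m+3) j
      = 6 * ((j+m+3).choose j) * ((j+m+6).choose (j+3))
        / (((m:ℚ)+4) * ((m:ℚ)+5) * ((m:ℚ)+6)) := by
    rw [A, show j+m+3-j+3 = m+6 by omega, show j+m+3+3 = j+m+6 by omega]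
    have hf : ((j+m+6).factorial : ℚ)
        = ((j+m+6).choose (j+3)) * ((j+3).factorial) * ((m+3).factorial) := by
      have := Nat.choose_mul_factorial_mul_factorial (show j+3 ≤ j+m+6 by omega)
      rw [show j+m+6-(j+3) = m+3 by omega] at this
      exact_mod_cast this.symm
    have hm : ((m+6).factorial : ℚ)
        = (((m:ℚ)+4) * ((m:ℚ)+5) * ((m:ℚ)+6)) * ((m+3).factorial) := by
      rw [show m+6 = ((m+3)+1)+1+1 by omega]
      push_cast [Nat.factorial_succ]
      ring
    rw [hf, hm]
    have f1 : (((j+3).factorial : ℕ) : ℚ) ≠ 0 := Nat.cast_ne_zero.mpr (Nat.factorial_ne_zero _)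
    have f2 : (((m+3).factorial : ℕ) : ℚ) ≠ 0 := Nat.cast_ne_zero.mpr (Nat.factorial_ne_zero _)
    have : ((Nat.factorial 3 : ℕ) : ℚ) = 6 := by norm_num [Nat.factorial]
    rw [this]
    field_simp
  -- abbreviations (purely notational, inline)
  -- common denominator Q and numerators; each product term over Q
  have R1 : (((j+m+3).choose j : ℕ) : ℚ) * (((j+m+6).choose (j+3) : ℕ) : ℚ)
      = (((j+m+3).choose j : ℕ) : ℚ)^2 * (((j:ℚ)+(m:ℚ)+4)*((j:ℚ)+(m:ℚ)+5)*((j:ℚ)+(m:ℚ)+6))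
        * (((j:ℚ)+1)*((j:ℚ)+2)*((j:ℚ)+3)) * (((m:ℚ)+4)*((m:ℚ)+5)*((m:ℚ)+6))
        / (((((j:ℚ)+1)*((j:ℚ)+2)*((j:ℚ)+3))^2)*(((m:ℚ)+4)*((m:ℚ)+5)*((m:ℚ)+6))) := by
    rw [q6, q5, q4, q7]; field_simp
  have R2 : (((j+m+3).choose (j+1) : ℕ) : ℚ) * (((j+m+6).choose (j+2) : ℕ) : ℚ)
      = (((j+m+3).choose j : ℕ) : ℚ)^2 * ((m:ℚ)+3) * (((j:ℚ)+(m:ℚ)+4)*((j:ℚ)+(m:ℚ)+5)*((j:ℚ)+(m:ℚ)+6))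
        * ((j:ℚ)+2) * ((j:ℚ)+3)^2 * ((m:ℚ)+5) * ((m:ℚ)+6)
        / (((((j:ℚ)+1)*((j:ℚ)+2)*((j:ℚ)+3))^2)*(((m:ℚ)+4)*((m:ℚ)+5)*((m:ℚ)+6))) := by
    rw [q1, q5, q4, q7]; field_simp
  have R3 : (((j+m+3).choose (j+1) : ℕ) : ℚ) * (((j+m+6).choose (j+3) : ℕ) : ℚ)
      = (((j+m+3).choose j : ℕ) : ℚ)^2 * ((m:ℚ)+3) * (((j:ℚ)+(m:ℚ)+4)*((j:ℚ)+(m:ℚ)+5)*((j:ℚ)+(m:ℚ)+6))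
        * ((j:ℚ)+2) * ((j:ℚ)+3) * (((m:ℚ)+4)*((m:ℚ)+5)*((m:ℚ)+6))
        / (((((j:ℚ)+1)*((j:ℚ)+2)*((j:ℚ)+3))^2)*(((m:ℚ)+4)*((m:ℚ)+5)*((m:ℚ)+6))) := by
    rw [q1, q6, q5, q4, q7]; field_simp
  have R4 : (((j+m+3).choose (j+2) : ℕ) : ℚ) * (((j+m+6).choose (j+1) : ℕ) : ℚ)
      = (((j+m+3).choose j : ℕ) : ℚ)^2 * ((m:ℚ)+3) * ((m:ℚ)+2) * (((j:ℚ)+(m:ℚ)+4)*((j:ℚ)+(m:ℚ)+5)*((j:ℚ)+(m:ℚ)+6))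
        * ((j:ℚ)+2) * ((j:ℚ)+3)^2 * ((m:ℚ)+6)
        / (((((j:ℚ)+1)*((j:ℚ)+2)*((j:ℚ)+3))^2)*(((m:ℚ)+4)*((m:ℚ)+5)*((m:ℚ)+6))) := by
    rw [q2, q1, q4, q7]; field_simp
  have R5 : (((j+m+3).choose (j+2) : ℕ) : ℚ) * (((j+m+6).choose (j+2) : ℕ) : ℚ)
      = (((j+m+3).choose j : ℕ) : ℚ)^2 * ((m:ℚ)+3) * ((m:ℚ)+2) * (((j:ℚ)+(m:ℚ)+4)*((j:ℚ)+(m:ℚ)+5)*((j:ℚ)+(m:ℚ)+6))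
        * ((j:ℚ)+3)^2 * ((m:ℚ)+5) * ((m:ℚ)+6)
        / (((((j:ℚ)+1)*((j:ℚ)+2)*((j:ℚ)+3))^2)*(((m:ℚ)+4)*((m:ℚ)+5)*((m:ℚ)+6))) := by
    rw [q2, q1, q5, q4, q7]; field_simp
  have R6 : (((j+m+3).choose (j+2) : ℕ) : ℚ) * (((j+m+6).choose (j+3) : ℕ) : ℚ)
      = (((j+m+3).choose j : ℕ) : ℚ)^2 * ((m:ℚ)+3) * ((m:ℚ)+2) * (((j:ℚ)+(m:ℚ)+4)*((j:ℚ)+(m:ℚ)+5)*((j:ℚ)+(m:ℚ)+6))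
        * ((j:ℚ)+3) * (((m:ℚ)+4)*((m:ℚ)+5)*((m:ℚ)+6))
        / (((((j:ℚ)+1)*((j:ℚ)+2)*((j:ℚ)+3))^2)*(((m:ℚ)+4)*((m:ℚ)+5)*((m:ℚ)+6))) := by
    rw [q2, q1, q6, q5, q4, q7]; field_simp
  have R7 : (((j+m+3).choose (j+3) : ℕ) : ℚ) * (((j+m+6).choose j : ℕ) : ℚ)
      = (((j+m+3).choose j : ℕ) : ℚ)^2 * ((m:ℚ)+1) * ((m:ℚ)+2) * ((m:ℚ)+3)
        * (((j:ℚ)+(m:ℚ)+4)*((j:ℚ)+(m:ℚ)+5)*((j:ℚ)+(m:ℚ)+6))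
        * (((j:ℚ)+1)*((j:ℚ)+2)*((j:ℚ)+3))
        / (((((j:ℚ)+1)*((j:ℚ)+2)*((j:ℚ)+3))^2)*(((m:ℚ)+4)*((m:ℚ)+5)*((m:ℚ)+6))) := by
    rw [q3, q2, q1, q7]; field_simp
  have R8 : (((j+m+3).choose (j+3) : ℕ) : ℚ) * (((j+m+6).choose (j+1) : ℕ) : ℚ)
      = (((j+m+3).choose j : ℕ) : ℚ)^2 * ((m:ℚ)+1) * ((m:ℚ)+2) * ((m:ℚ)+3)
        * (((j:ℚ)+(m:ℚ)+4)*((j:ℚ)+(m:ℚ)+5)*((j:ℚ)+(m:ℚ)+6))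
        * ((j:ℚ)+2) * ((j:ℚ)+3) * ((m:ℚ)+6)
        / (((((j:ℚ)+1)*((j:ℚ)+2)*((j:ℚ)+3))^2)*(((m:ℚ)+4)*((m:ℚ)+5)*((m:ℚ)+6))) := by
    rw [q3, q2, q1, q4, q7]; field_simp
  have R9 : (((j+m+3).choose (j+3) : ℕ) : ℚ) * (((j+m+6).choose (j+2) : ℕ) : ℚ)
      = (((j+m+3).choose j : ℕ) : ℚ)^2 * ((m:ℚ)+1) * ((m:ℚ)+2) * ((m:ℚ)+3)
        * (((j:ℚ)+(m:ℚ)+4)*((j:ℚ)+(m:ℚ)+5)*((j:ℚ)+(m:ℚ)+6))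
        * ((j:ℚ)+3) * ((m:ℚ)+5) * ((m:ℚ)+6)
        / (((((j:ℚ)+1)*((j:ℚ)+2)*((j:ℚ)+3))^2)*(((m:ℚ)+4)*((m:ℚ)+5)*((m:ℚ)+6))) := by
    rw [q3, q2, q1, q5, q4, q7]; field_simp
  have L : (10 : ℚ) * A 3 (j+m+3) j
      = 60 * (((j+m+3).choose j : ℕ) : ℚ)^2 * (((j:ℚ)+(m:ℚ)+4)*((j:ℚ)+(m:ℚ)+5)*((j:ℚ)+(m:ℚ)+6))
        * (((j:ℚ)+1)*((j:ℚ)+2)*((j:ℚ)+3))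
        / (((((j:ℚ)+1)*((j:ℚ)+2)*((j:ℚ)+3))^2)*(((m:ℚ)+4)*((m:ℚ)+5)*((m:ℚ)+6))) := by
    rw [hA, q6, q5, q4, q7]; field_simp; ring
  linear_combination L - 10*R1 + 15*R2 - 15*R3 - 6*R4 + 18*R5 - 6*R6 + R7 - 3*R8 + 6*R9

private lemma key0 (j : ℕ) :
    (10 : ℚ) * A 3 j j =
      10*(j.choose j)*((j+3).choose (j+3))
      - 15*(j.choose (j+1))*((j+3).choose (j+2))
      + 15*(j.choose (j+1))*((j+3).choose (j+3))
      + 6*(j.choose (j+2))*((j+3).choose (j+1))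
      - 18*(j.choose (j+2))*((j+3).choose (j+2))
      + 6*(j.choose (j+2))*((j+3).choose (j+3))
      - (j.choose (j+3))*((j+3).choose j)
      + 3*(j.choose (j+3))*((j+3).choose (j+1))
      - 6*(j.choose (j+3))*((j+3).choose (j+2)) := by
  rw [A, Nat.sub_self]
  simp only [Nat.choose_self, Nat.choose_eq_zero_of_lt (show j < j+1 by omega),
    Nat.choose_eq_zero_of_lt (show j < j+2 by omega),
    Nat.choose_eq_zero_of_lt (show j < j+3 by omega)]
  have h := Nat.factorial_ne_zero (j+3)
  have : ((j+3).factorial : ℚ) ≠ 0 := Nat.cast_ne_zero.mpr h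
  push_cast
  field_simp [Nat.factorial]
  ring

private lemma key1 (j : ℕ) :
    (10 : ℚ) * A 3 (j+1) j =
      10*((j+1).choose j)*((j+4).choose (j+3))
      - 15*((j+1).choose (j+1))*((j+4).choose (j+2))
      + 15*((j+1).choose (j+1))*((j+4).choose (j+3))
      + 6*((j+1).choose (j+2))*((j+4).choose (j+1))
      - 18*((j+1).choose (j+2))*((j+4).choose (j+2))
      + 6*((j+1).choose (j+2))*((j+4).choose (j+3))
      - ((j+1).choose (j+3))*((j+4).choose j)
      + 3*((j+1).choose (j+3))*((j+4).choose (j+1))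
      - 6*((j+1).choose (j+3))*((j+4).choose (j+2)) := by
  rw [A]
  rw [show j+1-j+3 = 4 by omega, show j+1+3 = j+4 by omega]
  simp only [Nat.choose_eq_zero_of_lt (show j+1 < j+2 by omega),
    Nat.choose_eq_zero_of_lt (show j+1 < j+3 by omega)]
  rw [Nat.cast_choose ℚ (show j ≤ j+1 by omega),
      Nat.cast_choose ℚ (show j+1 ≤ j+1 from le_refl _),
      Nat.cast_choose ℚ (show j+2 ≤ j+4 by omega),
      Nat.cast_choose ℚ (show j+3 ≤ j+4 by omega)]
  rw [show j+1-j = 1 by omega, show j+1-(j+1) = 0 by omega,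
      show j+4-(j+2) = 2 by omega, show j+4-(j+3) = 1 by omega]
  simp only [Nat.factorial_succ]
  norm_num [Nat.factorial]
  push_cast
  field_simp
  ring

private lemma key2 (j : ℕ) :
    (10 : ℚ) * A 3 (j+2) j =
      10*((j+2).choose j)*((j+5).choose (j+3))
      - 15*((j+2).choose (j+1))*((j+5).choose (j+2))
      + 15*((j+2).choose (j+1))*((j+5).choose (j+3))
      + 6*((j+2).choose (j+2))*((j+5).choose (j+1))
      - 18*((j+2).choose (j+2))*((j+5).choose (j+2))
      + 6*((j+2).choose (j+2))*((j+5).choose (j+3))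
      - ((j+2).choose (j+3))*((j+5).choose j)
      + 3*((j+2).choose (j+3))*((j+5).choose (j+1))
      - 6*((j+2).choose (j+3))*((j+5).choose (j+2)) := by
  rw [A]
  rw [show j+2-j+3 = 5 by omega, show j+2+3 = j+5 by omega]
  simp only [Nat.choose_eq_zero_of_lt (show j+2 < j+3 by omega)]
  rw [Nat.cast_choose ℚ (show j ≤ j+2 by omega),
      Nat.cast_choose ℚ (show j+1 ≤ j+2 by omega),
      Nat.cast_choose ℚ (show j+2 ≤ j+2 from le_refl _),
      Nat.cast_choose ℚ (show j+1 ≤ j+5 by omega),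
      Nat.cast_choose ℚ (show j+2 ≤ j+5 by omega),
      Nat.cast_choose ℚ (show j+3 ≤ j+5 by omega)]
  rw [show j+2-j = 2 by omega, show j+2-(j+1) = 1 by omega,
      show j+2-(j+2) = 0 by omega, show j+5-(j+1) = 4 by omega,
      show j+5-(j+2) = 3 by omega, show j+5-(j+3) = 2 by omega]
  simp only [Nat.factorial_succ]
  norm_num [Nat.factorial]
  push_cast
  field_simp
  ring

private lemma key (k j : ℕ) (h : j ≤ k) :
    (10 : ℚ) * A 3 k j = ((Z6 k j : ℤ) : ℚ) := by
  rw [Z6_castQ]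
  obtain ⟨d, rfl⟩ := Nat.exists_eq_add_of_le h
  rcases d with _ | _ | _ | m
  · simpa using key0 j
  · simpa using key1 j
  · simpa using key2 j
  · have e : j + (m+3) = j + m + 3 := by omega
    rw [e, show j + m + 3 + 3 = j + m + 6 by omega]
    exact keyGen j m

/-- `10 · A_{k,j}(3)` is an integer for all `j ≤ k`, and any positive integer `r` with
`r · A_{k,j}(3)` an integer for all `j ≤ k` is divisible by `10`; i.e. `r₃ = 10 = C(5,3)`. -/
theorem stmt6 :
    (∀ k j : ℕ, j ≤ k → ∃ z : ℤ, (10 : ℚ) * A 3 k j = (z : ℚ)) ∧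
    (∀ r : ℕ, 0 < r → (∀ k j : ℕ, j ≤ k → ∃ z : ℤ, (r : ℚ) * A 3 k j = (z : ℚ)) →
      10 ∣ r) := by
  constructor
  · intro k j h
    exact ⟨Z6 k j, key k j h⟩
  · intro r _ h
    have hA1 : A 3 2 1 = 5/2 := by norm_num [A, Nat.factorial, Nat.choose]
    have hA2 : A 3 4 2 = 63/5 := by norm_num [A, Nat.factorial, Nat.choose]
    obtain ⟨z₁, hz₁⟩ := h 2 1 (by norm_num)
    obtain ⟨z₂, hz₂⟩ := h 4 2 (by norm_num)
    rw [hA1] at hz₁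
    rw [hA2] at hz₂
    have e1 : (5 * r : ℤ) = 2 * z₁ := by
      have : (5 * r : ℚ) = 2 * z₁ := by field_simp at hz₁ ⊢; linarith
      exact_mod_cast this
    have e2 : (63 * r : ℤ) = 5 * z₂ := by
      have : (63 * r : ℚ) = 5 * z₂ := by field_simp at hz₂ ⊢; linarith
      exact_mod_cast this
    have : (10 : ℤ) ∣ (r : ℤ) := by omega
    exact_mod_cast this
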